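/- There exists a bijection f : A → B between two θ-closed, discrete subsets A, B of the Bing space B that cannot be extended to a homeomorphism of the Bing space, because A is not θ-discrete while B is θ-discrete. -/

import Mathlib

/-- A point of the Bing space: a rational pair `(x, y)` with `0 ≤ y`. -/
structure BingPt where
  x : ℚ
  y : ℚ
  hy : 0 ≤ y

/-- The pair of base "intervals" attached to the point `(a,b)`:
rational points `(x,0)` with `|x - (a - b/√3)| < ε` or `|x - (a + b/√3)| < ε`. -/
def wedge (a b : ℚ) (ε : ℝ) : Set BingPt :=
  {z : BingPt | z.y = 0 ∧ (|(z.x : ℝ) - ((a : ℝ) - (b : ℝ) / Real.sqrt 3)| < ε ∨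
    |(z.x : ℝ) - ((a : ℝ) + (b : ℝ) / Real.sqrt 3)| < ε)}

/-- A set `U` is Bing-open if each of its points `(a,b)` admits `ε > 0`
with the corresponding base intervals contained in `U`. -/
def BingOpen (U : Set BingPt) : Prop :=
  ∀ z ∈ U, ∃ ε : ℝ, 0 < ε ∧ wedge z.x z.y ε ⊆ U

/-- The Bing topology. -/
instance : TopologicalSpace BingPt where
  IsOpen := BingOpen
  isOpen_univ := fun _ _ => ⟨1, one_pos, fun _ _ => trivial⟩
  isOpen_inter := by
    intro U V hU hV z hz
    obtain ⟨ε1, hε1, h1⟩ := hU z hz.1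
    obtain ⟨ε2, hε2, h2⟩ := hV z hz.2
    refine ⟨min ε1 ε2, lt_min hε1 hε2, fun w hw => ⟨h1 ⟨hw.1, ?_⟩, h2 ⟨hw.1, ?_⟩⟩⟩
    · exact hw.2.imp (fun h => h.trans_le (min_le_left _ _)) (fun h => h.trans_le (min_le_left _ _))
    · exact hw.2.imp (fun h => h.trans_le (min_le_right _ _)) (fun h => h.trans_le (min_le_right _ _))
  isOpen_sUnion := by
    intro S hS z hz
    obtain ⟨U, hU, hzU⟩ := hz
    obtain ⟨ε, hε, h⟩ := hS U hU z hzU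
    exact ⟨ε, hε, fun w hw => ⟨U, hU, h hw⟩⟩

/-- `D` is θ-discrete: every point has a neighborhood whose closure meets `D` in ≤ 1 point. -/
def ThetaDiscrete {X : Type*} [TopologicalSpace X] (D : Set X) : Prop :=
  ∀ x : X, ∃ O ∈ nhds x, (closure O ∩ D).Subsingleton

/-- `D` is θ-closed: every point outside `D` has a neighborhood whose closure misses `D`. -/
def ThetaClosed {X : Type*} [TopologicalSpace X] (D : Set X) : Prop :=
  ∀ x : X, x ∉ D → ∃ O ∈ nhds x, closure O ∩ D = ∅

/-- `D` is discrete (as a subset): every point has a neighborhood meeting `D` in ≤ 1 point. -/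
def DiscreteIn {X : Type*} [TopologicalSpace X] (D : Set X) : Prop :=
  ∀ x : X, ∃ O ∈ nhds x, (O ∩ D).Subsingleton

noncomputable section
open Set Real

lemma irr3 : Irrational (Real.sqrt 3) := by
  have : Real.sqrt 3 = Real.sqrt ((3:ℕ):ℝ) := by norm_num
  rw [this, irrational_sqrt_natCast_iff]
  rintro ⟨r, hr⟩
  rcases Nat.lt_or_ge r 2 with h | h
  · interval_cases r <;> omega
  · nlinarith

lemma sqrt3_pos : (0:ℝ) < Real.sqrt 3 := Real.sqrt_pos.mpr (by norm_num)

lemma BingPt.ext' {z w : BingPt} (hx : z.x = w.x) (hy : z.y = w.y) : z = w := by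
  cases z; cases w; simp_all

/-- Key algebraic fact: `a + b/√3 = c/√3` with `a,b,c` rational forces `a = 0, b = c`. -/
lemma rat_add_div_sqrt3 {a b c : ℚ} (h : (a:ℝ) + (b:ℝ)/Real.sqrt 3 = (c:ℝ)/Real.sqrt 3) :
    a = 0 ∧ b = c := by
  have h3 := sqrt3_pos
  have h' : (a:ℝ) * Real.sqrt 3 = (c:ℝ) - b := by
    field_simp at h; nlinarith [h]
  have ha : a = 0 := by
    by_contra ha
    have : Real.sqrt 3 = ((c - b)/a : ℚ) := by
      push_cast
      rw [eq_div_iff (by exact_mod_cast ha)]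
      linarith [h']
    exact irr3 ⟨_, this.symm⟩
  refine ⟨ha, ?_⟩
  have : (c:ℝ) - b = 0 := by rw [← h', ha]; push_cast; ring
  have : (b:ℝ) = c := by linarith
  exact_mod_cast this

/-- feet of a point -/
def footm (z : BingPt) : ℝ := (z.x : ℝ) - (z.y : ℝ) / Real.sqrt 3
def footp (z : BingPt) : ℝ := (z.x : ℝ) + (z.y : ℝ) / Real.sqrt 3

lemma mem_wedge_elim {z w : BingPt} {ε : ℝ} (h : w ∈ wedge z.x z.y ε) :
    w.y = 0 ∧ ∃ f, (f = footm z ∨ f = footp z) ∧ |(w.x:ℝ) - f| < ε := by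
  obtain ⟨hy, hx⟩ := h
  exact ⟨hy, hx.elim (fun h => ⟨footm z, Or.inl rfl, h⟩) (fun h => ⟨footp z, Or.inr rfl, h⟩)⟩

lemma mem_wedge_intro {z w : BingPt} {ε : ℝ} (h1 : w.y = 0)
    (h2 : |(w.x:ℝ) - footm z| < ε ∨ |(w.x:ℝ) - footp z| < ε) : w ∈ wedge z.x z.y ε :=
  ⟨h1, h2⟩

lemma footm_of_y_eq_zero {w : BingPt} (h : w.y = 0) : footm w = w.x := by
  simp [footm, h]
lemma footp_of_y_eq_zero {w : BingPt} (h : w.y = 0) : footp w = w.x := by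
  simp [footp, h]

/-- basic neighborhoods -/
def Nb (z : BingPt) (ε : ℝ) : Set BingPt := insert z (wedge z.x z.y ε)

lemma Nb_isOpen (z : BingPt) {ε : ℝ} (hε : 0 < ε) : IsOpen (Nb z ε) := by
  show BingOpen (Nb z ε)
  intro w hw
  rcases hw with rfl | hw
  · exact ⟨ε, hε, Set.subset_insert _ _⟩
  · obtain ⟨hwy, f, hf, hlt⟩ := mem_wedge_elim hw
    refine ⟨ε - |(w.x:ℝ) - f|, by linarith, fun u hu => ?_⟩
    obtain ⟨huy, g, hg, hglt⟩ := mem_wedge_elim hu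
    have hg' : g = (w.x:ℝ) := by
      rcases hg with rfl | rfl
      · exact footm_of_y_eq_zero hwy
      · exact footp_of_y_eq_zero hwy
    rw [hg'] at hglt
    have : |(u.x:ℝ) - f| < ε := by
      calc |(u.x:ℝ) - f| ≤ |(u.x:ℝ) - w.x| + |(w.x:ℝ) - f| := abs_sub_le _ _ _
        _ < ε := by linarith
    right
    refine mem_wedge_intro huy ?_
    rcases hf with rfl | rfl
    · exact Or.inl this
    · exact Or.inr this

lemma mem_Nb_self (z : BingPt) (ε : ℝ) : z ∈ Nb z ε := Set.mem_insert _ _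

lemma Nb_mem_nhds (z : BingPt) {ε : ℝ} (hε : 0 < ε) : Nb z ε ∈ nhds z :=
  (Nb_isOpen z hε).mem_nhds (mem_Nb_self z ε)

/-- upper bound region for the closure of a basic neighborhood -/
def Sset (z : BingPt) (ε : ℝ) : Set BingPt :=
  {w | |footm w - footm z| ≤ ε ∨ |footm w - footp z| ≤ ε ∨
       |footp w - footm z| ≤ ε ∨ |footp w - footp z| ≤ ε}

lemma closure_Nb_subset (z : BingPt) {ε : ℝ} (hε : 0 < ε) :
    closure (Nb z ε) ⊆ Sset z ε := by
  intro w hw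
  by_contra hwS
  simp only [Sset, Set.mem_setOf_eq, not_or, not_le] at hwS
  obtain ⟨h1, h2, h3, h4⟩ := hwS
  set m : ℝ := min (min (|footm w - footm z|) (|footm w - footp z|))
    (min (|footp w - footm z|) (|footp w - footp z|)) with hm
  have hmle1 : m ≤ |footm w - footm z| := le_trans (min_le_left _ _) (min_le_left _ _)
  have hmle2 : m ≤ |footm w - footp z| := le_trans (min_le_left _ _) (min_le_right _ _)
  have hmle3 : m ≤ |footp w - footm z| := le_trans (min_le_right _ _) (min_le_left _ _)
  have hmle4 : m ≤ |footp w - footp z| := le_trans (min_le_right _ _) (min_le_right _ _)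
  have hmgt : ε < m := by
    apply lt_min <;> apply lt_min <;> assumption
  set δ : ℝ := m - ε with hδ
  have hδpos : 0 < δ := by rw [hδ]; linarith
  have hδε : δ + ε = m := by rw [hδ]; ring
  have hwz : w ≠ z := fun he => by rw [he] at h1; simp at h1; linarith
  have hdisj : Nb w δ ∩ Nb z ε = ∅ := by
    ext u
    simp only [Set.mem_inter_iff, Set.mem_empty_iff_false, iff_false, not_and]
    intro hu1 hu2
    rcases hu1 with he1 | hu1 <;> rcases hu2 with he2 | hu2
    · exact hwz (by rw [← he1, he2])
    · obtain ⟨huy, f, hf, hfx⟩ := mem_wedge_elim hu2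
      have e : footm w = (u.x:ℝ) := by
        rw [he1] at huy; rw [footm_of_y_eq_zero huy, he1]
      rw [← e] at hfx
      rcases hf with rfl | rfl
      · linarith
      · linarith
    · obtain ⟨huy, f, hf, hfx⟩ := mem_wedge_elim hu1
      have e : footm z = (u.x:ℝ) := by
        rw [he2] at huy; rw [footm_of_y_eq_zero huy, he2]
      rw [← e, abs_sub_comm] at hfx
      rcases hf with rfl | rfl
      · linarith
      · linarith
    · obtain ⟨huy, fw, hfw, hw1⟩ := mem_wedge_elim hu1
      obtain ⟨_, fz, hfz, hz1⟩ := mem_wedge_elim hu2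
      have hlt : |fw - fz| < δ + ε := by
        calc |fw - fz| ≤ |fw - (u.x:ℝ)| + |(u.x:ℝ) - fz| := abs_sub_le _ _ _
          _ < δ + ε := by rw [abs_sub_comm]; linarith
      have hge : m ≤ |fw - fz| := by
        rcases hfw with rfl | rfl <;> rcases hfz with rfl | rfl <;> assumption
      linarith
  have : w ∉ closure (Nb z ε) := by
    rw [_root_.mem_closure_iff]
    push_neg
    exact ⟨Nb w δ, Nb_isOpen w hδpos, mem_Nb_self w δ, hdisj⟩
  exact this hw

/-! ### The sets A and C -/

def BingPt.origin : BingPt := ⟨0, 0, le_refl 0⟩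

def aPt (n : ℕ) : BingPt := ⟨0, 1/(n+1), by positivity⟩

lemma aPt_y (n : ℕ) : (aPt n).y = 1/((n:ℚ)+1) := rfl
lemma aPt_x (n : ℕ) : (aPt n).x = 0 := rfl

lemma aPt_y_pos (n : ℕ) : 0 < (aPt n).y := by rw [aPt_y]; positivity

def hseq : ℕ → BingPt
  | 0 => BingPt.origin
  | n+1 => aPt n

def intPt (m : ℤ) : BingPt := ⟨m, 0, le_refl 0⟩

def Aset : Set BingPt := Set.range hseq
def Cset : Set BingPt := Set.range intPt

lemma mem_Aset_iff {z : BingPt} :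
    z ∈ Aset ↔ z.x = 0 ∧ (z.y = 0 ∨ ∃ n : ℕ, z.y = 1/((n:ℚ)+1)) := by
  constructor
  · rintro ⟨n, rfl⟩
    cases n with
    | zero => exact ⟨rfl, Or.inl rfl⟩
    | succ k => exact ⟨rfl, Or.inr ⟨k, rfl⟩⟩
  · rintro ⟨hx, hy | ⟨n, hy⟩⟩
    · exact ⟨0, (BingPt.ext' hx.symm hy.symm : BingPt.origin = z)⟩
    · exact ⟨n+1, (BingPt.ext' hx.symm hy.symm : aPt n = z)⟩

lemma mem_Cset_iff {z : BingPt} : z ∈ Cset ↔ z.y = 0 ∧ ∃ m : ℤ, z.x = (m:ℚ) := by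
  constructor
  · rintro ⟨m, rfl⟩
    exact ⟨rfl, m, rfl⟩
  · rintro ⟨hy, m, hx⟩
    exact ⟨m, BingPt.ext' hx.symm hy.symm⟩

/-! ### arithmetic helpers -/

lemma int_far {f : ℝ} (hf : ∀ m : ℤ, f ≠ (m:ℝ)) : ∃ d : ℝ, 0 < d ∧ ∀ m : ℤ, d ≤ |f - m| := by
  have hfr := Int.floor_add_fract f
  have h0 : 0 ≤ Int.fract f := Int.fract_nonneg f
  have h1 : Int.fract f < 1 := Int.fract_lt_one f
  have hpos : 0 < Int.fract f := by
    rcases lt_or_eq_of_le h0 with h | h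
    · exact h
    · exact absurd (by linarith : f = (⌊f⌋ : ℝ)) (hf ⌊f⌋)
  refine ⟨min (Int.fract f) (1 - Int.fract f), lt_min hpos (by linarith), fun m => ?_⟩
  rcases le_or_gt m ⌊f⌋ with h | h
  · have hm : (m:ℝ) ≤ (⌊f⌋:ℝ) := by exact_mod_cast h
    have h2 : Int.fract f ≤ f - m := by linarith
    rw [abs_of_pos (by linarith)]
    exact le_trans (min_le_left _ _) h2
  · have hm : (⌊f⌋:ℝ) + 1 ≤ (m:ℝ) := by exact_mod_cast h
    have h2 : 1 - Int.fract f ≤ (m:ℝ) - f := by linarith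
    rw [abs_of_neg (by linarith), neg_sub]
    exact le_trans (min_le_right _ _) h2

lemma foot_irr {a b : ℚ} (hb : b ≠ 0) (q : ℚ) : (a:ℝ) + (b:ℝ)/Real.sqrt 3 ≠ (q:ℝ) := by
  intro h
  have h' : ((a - q : ℚ):ℝ) + (b:ℝ)/Real.sqrt 3 = ((0:ℚ):ℝ)/Real.sqrt 3 := by
    push_cast; rw [zero_div]; linarith
  obtain ⟨_, h2⟩ := rat_add_div_sqrt3 h'
  exact hb h2

lemma footm_eq (z : BingPt) : footm z = (z.x:ℝ) + ((-z.y : ℚ):ℝ)/Real.sqrt 3 := by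
  rw [footm]; push_cast; ring

lemma footp_eq (z : BingPt) : footp z = (z.x:ℝ) + ((z.y : ℚ):ℝ)/Real.sqrt 3 := rfl

lemma footm_ne_rat {z : BingPt} (hz : z.y ≠ 0) (q : ℚ) : footm z ≠ (q:ℝ) := by
  rw [footm_eq]
  exact foot_irr (by simpa using hz) q

lemma footp_ne_rat {z : BingPt} (hz : z.y ≠ 0) (q : ℚ) : footp z ≠ (q:ℝ) := by
  rw [footp_eq]
  exact foot_irr hz q

lemma footm_ne_int {z : BingPt} (hz : z.y ≠ 0) (m : ℤ) : footm z ≠ (m:ℝ) := by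
  have := footm_ne_rat hz (m:ℚ); rwa [Rat.cast_intCast] at this

lemma footp_ne_int {z : BingPt} (hz : z.y ≠ 0) (m : ℤ) : footp z ≠ (m:ℝ) := by
  have := footp_ne_rat hz (m:ℚ); rwa [Rat.cast_intCast] at this

/-! ### θ-properties of C -/

lemma Sset_axis {x u : BingPt} {ε : ℝ} (hu : u ∈ Sset x ε) (hyu : u.y = 0) (hyx : x.y = 0) :
    |(u.x:ℝ) - (x.x:ℝ)| ≤ ε := by
  simp only [Sset, Set.mem_setOf_eq] at hu
  rcases hu with h|h|h|h <;>
    simpa only [footm_of_y_eq_zero hyu, footp_of_y_eq_zero hyu,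
      footm_of_y_eq_zero hyx, footp_of_y_eq_zero hyx] using h

lemma C_empty_inter {x : BingPt} (hfm : ∀ m : ℤ, footm x ≠ (m:ℝ))
    (hfp : ∀ m : ℤ, footp x ≠ (m:ℝ)) :
    ∃ O ∈ nhds x, closure O ∩ Cset = ∅ := by
  obtain ⟨d1, hd1, hfar1⟩ := int_far hfm
  obtain ⟨d2, hd2, hfar2⟩ := int_far hfp
  have hε : 0 < min d1 d2 / 2 := by
    have := lt_min hd1 hd2; linarith
  refine ⟨Nb x (min d1 d2 / 2), Nb_mem_nhds x hε, ?_⟩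
  ext u
  simp only [Set.mem_inter_iff, Set.mem_empty_iff_false, iff_false, not_and]
  intro hu hc
  obtain ⟨hyu, m, hm⟩ := mem_Cset_iff.mp hc
  have hS := closure_Nb_subset x hε hu
  simp only [Sset, Set.mem_setOf_eq] at hS
  have e1 : footm u = (m:ℝ) := by rw [footm_of_y_eq_zero hyu, hm]; push_cast; ring
  have e2 : footp u = (m:ℝ) := by rw [footp_of_y_eq_zero hyu, hm]; push_cast; ring
  have g1 := hfar1 m
  have g2 := hfar2 m
  have hle1 : min d1 d2 / 2 < d1 := by have := min_le_left d1 d2; linarith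
  have hle2 : min d1 d2 / 2 < d2 := by have := min_le_right d1 d2; linarith
  rcases hS with h|h|h|h
  · rw [e1, abs_sub_comm] at h; linarith
  · rw [e1, abs_sub_comm] at h; linarith
  · rw [e2, abs_sub_comm] at h; linarith
  · rw [e2, abs_sub_comm] at h; linarith

lemma thetaClosed_C : ThetaClosed Cset := by
  intro x hx
  by_cases hy : x.y = 0
  · have hxx : ∀ m : ℤ, (x.x : ℝ) ≠ (m:ℝ) := by
      intro m h
      exact hx (mem_Cset_iff.mpr ⟨hy, m, by exact_mod_cast h⟩)
    refine C_empty_inter ?_ ?_ <;> intro m <;>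
      [rw [footm_of_y_eq_zero hy]; rw [footp_of_y_eq_zero hy]] <;> exact hxx m
  · exact C_empty_inter (footm_ne_int hy) (footp_ne_int hy)

lemma thetaDiscrete_C : ThetaDiscrete Cset := by
  intro x
  by_cases hy : x.y = 0
  · refine ⟨Nb x (1/3), Nb_mem_nhds x (by norm_num), ?_⟩
    intro u hu v hv
    obtain ⟨hyu, mu, hmu⟩ := mem_Cset_iff.mp hu.2
    obtain ⟨hyv, mv, hmv⟩ := mem_Cset_iff.mp hv.2
    have hu3 := Sset_axis (closure_Nb_subset x (by norm_num) hu.1) hyu hy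
    have hv3 := Sset_axis (closure_Nb_subset x (by norm_num) hv.1) hyv hy
    have : |(mu:ℝ) - (mv:ℝ)| < 1 := by
      rw [hmu] at hu3; rw [hmv] at hv3
      push_cast at hu3 hv3 ⊢
      calc |(mu:ℝ) - mv| ≤ |(mu:ℝ) - x.x| + |(x.x:ℝ) - mv| := abs_sub_le _ _ _
        _ < 1 := by rw [abs_sub_comm] at hv3; linarith
    have hmm : mu = mv := by
      have h' : |mu - mv| < 1 := by
        exact_mod_cast (by push_cast; exact this : |((mu - mv : ℤ):ℝ)| < 1)
      rw [abs_lt] at h'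
      omega
    exact BingPt.ext' (by rw [hmu, hmv, hmm]) (by rw [hyu, hyv])
  · obtain ⟨O, hO, hOe⟩ := C_empty_inter (footm_ne_int hy) (footp_ne_int hy)
    exact ⟨O, hO, by rw [hOe]; exact Set.subsingleton_empty⟩

/-! ### θ-properties of A -/

/-- foot positions of points of `A` -/
def Kset : Set ℝ :=
  insert 0 (Set.range (fun n : ℕ => (1/((n:ℝ)+1))/Real.sqrt 3) ∪
    Set.range (fun n : ℕ => -((1/((n:ℝ)+1))/Real.sqrt 3)))

lemma Kset_closed : IsClosed Kset := by
  have t0 : Filter.Tendsto (fun n : ℕ => (1/((n:ℝ)+1))/Real.sqrt 3) Filter.atTop (nhds 0) := by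
    have := tendsto_one_div_add_atTop_nhds_zero_nat.div_const (Real.sqrt 3)
    simpa using this
  have t1 : Filter.Tendsto (fun n : ℕ => -((1/((n:ℝ)+1))/Real.sqrt 3)) Filter.atTop (nhds 0) := by
    simpa using t0.neg
  have : Kset = insert 0 (Set.range (fun n : ℕ => (1/((n:ℝ)+1))/Real.sqrt 3)) ∪
      insert 0 (Set.range (fun n : ℕ => -((1/((n:ℝ)+1))/Real.sqrt 3))) := by
    rw [Kset, Set.insert_union_distrib]
  rw [this]
  exact (t0.isCompact_insert_range.union t1.isCompact_insert_range).isClosed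

lemma Kset_nonempty : Kset.Nonempty := ⟨0, Set.mem_insert _ _⟩

lemma footm_aPt (n : ℕ) : footm (aPt n) = -((1/((n:ℝ)+1))/Real.sqrt 3) := by
  rw [footm]; show ((0:ℚ):ℝ) - ((1/((n:ℚ)+1) : ℚ):ℝ)/Real.sqrt 3 = _
  push_cast; ring

lemma footp_aPt (n : ℕ) : footp (aPt n) = (1/((n:ℝ)+1))/Real.sqrt 3 := by
  rw [footp]; show ((0:ℚ):ℝ) + ((1/((n:ℚ)+1) : ℚ):ℝ)/Real.sqrt 3 = _
  push_cast; ring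

lemma footm_origin : footm BingPt.origin = 0 := by
  rw [footm]; show ((0:ℚ):ℝ) - ((0:ℚ):ℝ)/Real.sqrt 3 = 0; push_cast; ring

lemma footp_origin : footp BingPt.origin = 0 := by
  rw [footp]; show ((0:ℚ):ℝ) + ((0:ℚ):ℝ)/Real.sqrt 3 = 0; push_cast; ring

lemma foot_mem_K {w : BingPt} (hw : w ∈ Aset) : footm w ∈ Kset ∧ footp w ∈ Kset := by
  obtain ⟨n, rfl⟩ := hw
  cases n with
  | zero =>
    constructor
    · show footm BingPt.origin ∈ Kset
      rw [footm_origin]; exact Set.mem_insert _ _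
    · show footp BingPt.origin ∈ Kset
      rw [footp_origin]; exact Set.mem_insert _ _
  | succ k =>
    constructor
    · show footm (aPt k) ∈ Kset
      rw [footm_aPt]
      exact Set.mem_insert_of_mem _ (Set.mem_union_right _ ⟨k, rfl⟩)
    · show footp (aPt k) ∈ Kset
      rw [footp_aPt]
      exact Set.mem_insert_of_mem _ (Set.mem_union_left _ ⟨k, rfl⟩)

lemma sn_cast (n : ℕ) : (1/((n:ℝ)+1))/Real.sqrt 3 = ((1/((n:ℚ)+1) : ℚ):ℝ)/Real.sqrt 3 := by
  push_cast; ring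

lemma not_in_K_aux {x : BingPt} (hx : x ∉ Aset) {b : ℚ} (hb : b = x.y ∨ b = -x.y) :
    (x.x:ℝ) + (b:ℝ)/Real.sqrt 3 ∉ Kset := by
  intro hK
  rcases hK with h0 | ⟨n, hn⟩ | ⟨n, hn⟩
  · have h : (x.x:ℝ) + (b:ℝ)/Real.sqrt 3 = ((0:ℚ):ℝ)/Real.sqrt 3 := by rw [h0]; norm_num
    obtain ⟨h1, h2⟩ := rat_add_div_sqrt3 h
    have hy0 : x.y = 0 := by
      rcases hb with hbv | hbv
      · rw [← hbv]; exact h2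
      · have : -x.y = 0 := by rw [← hbv]; exact h2
        linarith
    exact hx (mem_Aset_iff.mpr ⟨h1, Or.inl hy0⟩)
  · have h : (x.x:ℝ) + (b:ℝ)/Real.sqrt 3 = ((1/((n:ℚ)+1) : ℚ):ℝ)/Real.sqrt 3 := by
      rw [← hn]; push_cast; ring
    obtain ⟨h1, h2⟩ := rat_add_div_sqrt3 h
    have hnpos : (0:ℚ) < 1/((n:ℚ)+1) := by positivity
    rcases hb with hbv | hbv
    · exact hx (mem_Aset_iff.mpr ⟨h1, Or.inr ⟨n, by rw [← hbv]; exact h2⟩⟩)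
    · have hyneg : x.y = -(1/((n:ℚ)+1)) := by
        have : -x.y = 1/((n:ℚ)+1) := by rw [← hbv]; exact h2
        linarith
      have := x.hy
      rw [hyneg] at this
      linarith
  · have h : (x.x:ℝ) + (b:ℝ)/Real.sqrt 3 = ((-(1/((n:ℚ)+1)) : ℚ):ℝ)/Real.sqrt 3 := by
      rw [← hn]; push_cast; ring
    obtain ⟨h1, h2⟩ := rat_add_div_sqrt3 h
    have hnpos : (0:ℚ) < 1/((n:ℚ)+1) := by positivity
    rcases hb with hbv | hbv
    · have hyneg : x.y = -(1/((n:ℚ)+1)) := by rw [← hbv]; exact h2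
      have := x.hy
      rw [hyneg] at this
      linarith
    · have hyy : x.y = 1/((n:ℚ)+1) := by
        have : -x.y = -(1/((n:ℚ)+1)) := by rw [← hbv]; exact h2
        linarith
      exact hx (mem_Aset_iff.mpr ⟨h1, Or.inr ⟨n, hyy⟩⟩)

lemma feet_not_mem_K {x : BingPt} (hx : x ∉ Aset) : footm x ∉ Kset ∧ footp x ∉ Kset := by
  constructor
  · rw [footm_eq]; exact not_in_K_aux hx (Or.inr rfl)
  · rw [footp_eq]; exact not_in_K_aux hx (Or.inl rfl)

lemma thetaClosed_A : ThetaClosed Aset := by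
  intro x hx
  obtain ⟨hm, hp⟩ := feet_not_mem_K hx
  have hd1 : 0 < Metric.infDist (footm x) Kset :=
    (Kset_closed.notMem_iff_infDist_pos Kset_nonempty).1 hm
  have hd2 : 0 < Metric.infDist (footp x) Kset :=
    (Kset_closed.notMem_iff_infDist_pos Kset_nonempty).1 hp
  set d1 := Metric.infDist (footm x) Kset
  set d2 := Metric.infDist (footp x) Kset
  have hε : 0 < min d1 d2 / 2 := by have := lt_min hd1 hd2; linarith
  refine ⟨Nb x (min d1 d2 / 2), Nb_mem_nhds x hε, ?_⟩
  ext u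
  simp only [Set.mem_inter_iff, Set.mem_empty_iff_false, iff_false, not_and]
  intro hu hA
  obtain ⟨hKm, hKp⟩ := foot_mem_K hA
  have hS := closure_Nb_subset x hε hu
  simp only [Sset, Set.mem_setOf_eq] at hS
  have hle1 : min d1 d2 / 2 < d1 := by have := min_le_left d1 d2; linarith
  have hle2 : min d1 d2 / 2 < d2 := by have := min_le_right d1 d2; linarith
  have i1 : d1 ≤ |footm x - footm u| := by
    have := Metric.infDist_le_dist_of_mem (x := footm x) hKm
    rwa [Real.dist_eq] at this
  have i2 : d1 ≤ |footm x - footp u| := by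
    have := Metric.infDist_le_dist_of_mem (x := footm x) hKp
    rwa [Real.dist_eq] at this
  have i3 : d2 ≤ |footp x - footm u| := by
    have := Metric.infDist_le_dist_of_mem (x := footp x) hKm
    rwa [Real.dist_eq] at this
  have i4 : d2 ≤ |footp x - footp u| := by
    have := Metric.infDist_le_dist_of_mem (x := footp x) hKp
    rwa [Real.dist_eq] at this
  rcases hS with h|h|h|h <;> rw [abs_sub_comm] at h <;> linarith

lemma discreteIn_A : DiscreteIn Aset := by
  intro x
  by_cases hx0 : x = BingPt.origin
  · refine ⟨Nb x 1, Nb_mem_nhds x one_pos, ?_⟩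
    intro u hu v hv
    have key : ∀ w : BingPt, w ∈ Nb x 1 ∩ Aset → w = x := by
      intro w hw
      rcases hw.1 with he | hwW
      · exact he
      · obtain ⟨hwy, f, _, _⟩ := mem_wedge_elim hwW
        have hwx : w.x = 0 := (mem_Aset_iff.mp hw.2).1
        rw [hx0]
        exact BingPt.ext' hwx hwy
    rw [key u hu, key v hv]
  · -- feet of x are nonzero
    have hfm : footm x ≠ 0 ∧ footp x ≠ 0 := by
      by_cases hy : x.y = 0
      · have hxx : x.x ≠ 0 := fun h => hx0 (BingPt.ext' h hy)
        rw [footm_of_y_eq_zero hy, footp_of_y_eq_zero hy]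
        constructor <;> exact_mod_cast hxx
      · constructor
        · have := footm_ne_rat hy 0; simpa using this
        · have := footp_ne_rat hy 0; simpa using this
    have hε : 0 < min |footm x| |footp x| := by
      apply lt_min <;> rw [abs_pos] <;> [exact hfm.1; exact hfm.2]
    refine ⟨Nb x (min |footm x| |footp x|), Nb_mem_nhds x hε, ?_⟩
    intro u hu v hv
    have key : ∀ w : BingPt, w ∈ Nb x (min |footm x| |footp x|) ∩ Aset → w = x := by
      intro w hw
      rcases hw.1 with he | hwW
      · exact he
      · exfalso
        obtain ⟨hwy, f, hf, hflt⟩ := mem_wedge_elim hwW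
        have hwx : w.x = 0 := (mem_Aset_iff.mp hw.2).1
        have : |(w.x:ℝ) - f| = |f| := by rw [hwx]; push_cast; rw [zero_sub, abs_neg]
        rw [this] at hflt
        rcases hf with rfl | rfl
        · exact absurd hflt (not_lt.mpr (min_le_left _ _))
        · exact absurd hflt (not_lt.mpr (min_le_right _ _))
    rw [key u hu, key v hv]

lemma origin_mem_A : BingPt.origin ∈ Aset := ⟨0, rfl⟩
lemma aPt_mem_A (n : ℕ) : aPt n ∈ Aset := ⟨n+1, rfl⟩

lemma aPt_mem_closure {O : Set BingPt} {ε : ℝ} (hε : 0 < ε)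
    (hO : wedge BingPt.origin.x BingPt.origin.y ε ⊆ O) {n : ℕ}
    (hn : footp (aPt n) < ε) : aPt n ∈ closure O := by
  rw [_root_.mem_closure_iff]
  intro o ho hao
  have hBo : BingOpen o := ho
  obtain ⟨δ, hδ, hsub⟩ := hBo _ hao
  have hfp : 0 < footp (aPt n) := by
    rw [footp_aPt]; positivity
  obtain ⟨q, hq⟩ := exists_rat_near (K := ℝ) (footp (aPt n))
    (show (0:ℝ) < min δ (ε - footp (aPt n)) from lt_min hδ (by linarith))
  set u : BingPt := ⟨q, 0, le_refl 0⟩ with hu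
  have hu1 : u ∈ wedge (aPt n).x (aPt n).y δ := by
    refine mem_wedge_intro rfl (Or.inr ?_)
    have : |(u.x:ℝ) - footp (aPt n)| = |footp (aPt n) - (q:ℝ)| := by
      rw [abs_sub_comm, hu]
    rw [this]
    exact lt_of_lt_of_le hq (min_le_left _ _)
  have hu2 : u ∈ wedge BingPt.origin.x BingPt.origin.y ε := by
    refine mem_wedge_intro rfl (Or.inr ?_)
    have e0 : footp BingPt.origin = 0 := footp_origin
    rw [e0, sub_zero]
    have hq2 : |footp (aPt n) - (q:ℝ)| < ε - footp (aPt n) :=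
      lt_of_lt_of_le hq (min_le_right _ _)
    have : |(q:ℝ)| ≤ |(q:ℝ) - footp (aPt n)| + |footp (aPt n)| := by
      calc |(q:ℝ)| = |((q:ℝ) - footp (aPt n)) + footp (aPt n)| := by ring_nf
        _ ≤ _ := abs_add_le _ _
    rw [abs_sub_comm] at this
    rw [abs_of_pos hfp] at this
    show |(u.x:ℝ)| < ε
    rw [hu]
    calc |(q:ℝ)| ≤ |footp (aPt n) - (q:ℝ)| + footp (aPt n) := this
      _ < (ε - footp (aPt n)) + footp (aPt n) := by linarith
      _ = ε := by ring
  exact ⟨u, hsub hu1, hO hu2⟩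

lemma not_thetaDiscrete_A : ¬ ThetaDiscrete Aset := by
  intro hTD
  obtain ⟨O, hO, hsub⟩ := hTD BingPt.origin
  obtain ⟨U, hUO, hUopen, hxU⟩ := mem_nhds_iff.mp hO
  have hB : BingOpen U := hUopen
  obtain ⟨ε, hε, hwedge⟩ := hB BingPt.origin hxU
  have hwO : wedge BingPt.origin.x BingPt.origin.y ε ⊆ O := hwedge.trans hUO
  -- pick n with footp (aPt n) < ε
  obtain ⟨n, hn⟩ := exists_nat_gt (1/ε)
  have h3 : (1:ℝ) ≤ Real.sqrt 3 := Real.one_le_sqrt.mpr (by norm_num)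
  have hnpos : (0:ℝ) < (n:ℝ) + 1 := by positivity
  have hfp : footp (aPt n) < ε := by
    rw [footp_aPt]
    have h1 : (1:ℝ)/((n:ℝ)+1) < ε := by
      rw [div_lt_iff₀ hnpos]
      rw [div_lt_iff₀ hε] at hn
      nlinarith
    calc (1/((n:ℝ)+1))/Real.sqrt 3 ≤ (1/((n:ℝ)+1))/1 := by
          apply div_le_div_of_nonneg_left (by positivity) one_pos h3
      _ < ε := by rw [div_one]; exact h1
  have m1 : BingPt.origin ∈ closure O ∩ Aset :=
    ⟨subset_closure (mem_of_mem_nhds hO), origin_mem_A⟩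
  have m2 : aPt n ∈ closure O ∩ Aset := ⟨aPt_mem_closure hε hwO hfp, aPt_mem_A n⟩
  have := hsub m1 m2
  have hy := congrArg BingPt.y this
  have hpos := aPt_y_pos n
  rw [← hy] at hpos
  exact lt_irrefl _ hpos

/-! ### assembly -/

lemma theta_to_disc {X : Type*} [TopologicalSpace X] {D : Set X}
    (h : ThetaDiscrete D) : DiscreteIn D := by
  intro x
  obtain ⟨O, hO, hs⟩ := h x
  exact ⟨O, hO, hs.anti (Set.inter_subset_inter_left _ subset_closure)⟩

lemma thetaDiscrete_preimage {g : BingPt ≃ₜ BingPt} {D : Set BingPt}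
    (hD : ThetaDiscrete D) : ThetaDiscrete (g ⁻¹' D) := by
  intro x
  obtain ⟨O, hO, hs⟩ := hD (g x)
  refine ⟨g ⁻¹' O, g.continuous.continuousAt.preimage_mem_nhds hO, ?_⟩
  rw [← Homeomorph.preimage_closure, ← Set.preimage_inter]
  exact hs.preimage g.injective

lemma hseq_inj : Function.Injective hseq := by
  intro a b h
  match a, b with
  | 0, 0 => rfl
  | 0, b+1 =>
    exfalso
    have hy := congrArg BingPt.y h
    have := aPt_y_pos b
    rw [show hseq (b+1) = aPt b from rfl, show hseq 0 = BingPt.origin from rfl] at hy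
    rw [← hy] at this
    exact lt_irrefl _ this
  | a+1, 0 =>
    exfalso
    have hy := congrArg BingPt.y h
    have := aPt_y_pos a
    rw [show hseq (a+1) = aPt a from rfl, show hseq 0 = BingPt.origin from rfl] at hy
    rw [hy] at this
    exact lt_irrefl _ this
  | a+1, b+1 =>
    have hy := congrArg BingPt.y h
    rw [show hseq (a+1) = aPt a from rfl, show hseq (b+1) = aPt b from rfl,
      aPt_y, aPt_y] at hy
    have ha : ((a:ℚ)+1) ≠ 0 := by positivity
    have hb : ((b:ℚ)+1) ≠ 0 := by positivity
    rw [div_eq_div_iff ha hb] at hy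
    have : (a:ℚ) = b := by linarith
    have : a = b := by exact_mod_cast this
    rw [this]

lemma intPt_inj : Function.Injective intPt := by
  intro a b h
  have h2 := congrArg BingPt.x h
  simp only [intPt] at h2
  exact_mod_cast h2

noncomputable def fequiv : ↥Aset ≃ ↥Cset :=
  ((Equiv.ofInjective hseq hseq_inj).symm.trans (Denumerable.eqv ℤ).symm).trans
    (Equiv.ofInjective intPt intPt_inj)


/-- There is a bijection between two θ-closed discrete subsets of the Bing space which
extends to no homeomorphism of the Bing space, since one set is θ-discrete and the
other is not. -/
theorem bing_nonextendable_bijection :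
    ∃ A C : Set BingPt, ThetaClosed A ∧ DiscreteIn A ∧ ThetaClosed C ∧ DiscreteIn C ∧
      ¬ ThetaDiscrete A ∧ ThetaDiscrete C ∧
      ∃ f : A → C, Function.Bijective f ∧
        ¬ ∃ h : BingPt ≃ₜ BingPt, ∀ z : A, h (z : BingPt) = (f z : BingPt) := by
  refine ⟨Aset, Cset, thetaClosed_A, discreteIn_A, thetaClosed_C,
    theta_to_disc thetaDiscrete_C, not_thetaDiscrete_A, thetaDiscrete_C,
    fequiv, fequiv.bijective, ?_⟩
  rintro ⟨g, hg⟩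
  apply not_thetaDiscrete_A
  have hAC : Aset = g ⁻¹' Cset := by
    ext z
    constructor
    · intro hz
      have h1 := hg ⟨z, hz⟩
      show g z ∈ Cset
      rw [h1]
      exact (fequiv ⟨z, hz⟩).2
    · intro hz
      obtain ⟨a, ha⟩ := fequiv.surjective ⟨g z, hz⟩
      have h1 : g (a : BingPt) = g z := by
        rw [hg a, ha]
      have h2 := g.injective h1
      rw [← h2]
      exact a.2
  rw [hAC]
  exact thetaDiscrete_preimage thetaDiscrete_C
end
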